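/- Let V and W be closed symmetric monoidal model categories (satisfying the pushout-product and unit axioms) and let F : W ⇄ V : G be a weak monoidal Quillen adjunction. Then for every cofibrant object w of W and every fibrant object v of V, the canonical comparison map φ_{w,v} : G([F w, v]_V) → [w, G v]_W is a weak equivalence in W. -/

import Mathlib

/-!
STATEMENT 5: Let `V` and `W` be closed symmetric monoidal model categories (satisfying the
pushout-product and unit axioms) and let `F : W ⇄ V : G` be a weak monoidal Quillen
adjunction. Then for every cofibrant object `w` of `W` and every fibrant object `v` of `V`,
the canonical comparison map `φ_{w,v} : G([F w, v]_V) → [w, G v]_W` is a weak equivalence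
in `W`.
-/

open CategoryTheory Category Limits MonoidalCategory Functor

/-- `f` is a retract of `g` in the arrow category. -/
def IsRetractOfMaps {C : Type*} [Category C] {X Y X' Y' : C}
    (f : X ⟶ Y) (g : X' ⟶ Y') : Prop :=
  ∃ (i : X ⟶ X') (r : X' ⟶ X) (i' : Y ⟶ Y') (r' : Y' ⟶ Y),
    i ≫ r = 𝟙 X ∧ i' ≫ r' = 𝟙 Y ∧ i ≫ g = f ≫ i' ∧ g ≫ r' = r ≫ f

/-- A model structure on a category: weak equivalences, fibrations and cofibrations,
satisfying the two-out-of-three, retract, lifting and factorization axioms. -/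
structure ModelStruct (C : Type*) [Category C] where
  weq : MorphismProperty C
  fib : MorphismProperty C
  cof : MorphismProperty C
  weq_id : ∀ X : C, weq (𝟙 X)
  weq_comp : ∀ {X Y Z : C} (f : X ⟶ Y) (g : Y ⟶ Z), weq f → weq g → weq (f ≫ g)
  weq_of_postcomp : ∀ {X Y Z : C} (f : X ⟶ Y) (g : Y ⟶ Z), weq g → weq (f ≫ g) → weq f
  weq_of_precomp : ∀ {X Y Z : C} (f : X ⟶ Y) (g : Y ⟶ Z), weq f → weq (f ≫ g) → weq g
  weq_retract : ∀ {X Y X' Y' : C} (f : X ⟶ Y) (g : X' ⟶ Y'),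
    IsRetractOfMaps f g → weq g → weq f
  fib_retract : ∀ {X Y X' Y' : C} (f : X ⟶ Y) (g : X' ⟶ Y'),
    IsRetractOfMaps f g → fib g → fib f
  cof_retract : ∀ {X Y X' Y' : C} (f : X ⟶ Y) (g : X' ⟶ Y'),
    IsRetractOfMaps f g → cof g → cof f
  lift : ∀ {A B X Y : C} (i : A ⟶ B) (p : X ⟶ Y), cof i → fib p →
    (weq i ∨ weq p) → HasLiftingProperty i p
  factor_cof_trivFib : ∀ {X Y : C} (f : X ⟶ Y), ∃ (Z : C) (g : X ⟶ Z) (h : Z ⟶ Y),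
    cof g ∧ fib h ∧ weq h ∧ g ≫ h = f
  factor_trivCof_fib : ∀ {X Y : C} (f : X ⟶ Y), ∃ (Z : C) (g : X ⟶ Z) (h : Z ⟶ Y),
    cof g ∧ weq g ∧ fib h ∧ g ≫ h = f

/-- An object is cofibrant if the map from the initial object is a cofibration. -/
def ModelStruct.Cofibrant {C : Type*} [Category C] [HasInitial C]
    (M : ModelStruct C) (x : C) : Prop :=
  M.cof (initial.to x)

/-- An object is fibrant if the map to the terminal object is a fibration. -/
def ModelStruct.Fibrant {C : Type*} [Category C] [HasTerminal C]
    (M : ModelStruct C) (x : C) : Prop :=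
  M.fib (terminal.from x)

/-- A Quillen adjunction: an adjunction whose left adjoint preserves cofibrations
and trivial cofibrations. -/
structure QuillenAdjunction {W V : Type*} [Category W] [Category V]
    (MW : ModelStruct W) (MV : ModelStruct V) (F : W ⥤ V) (G : V ⥤ W) where
  adj : F ⊣ G
  F_cof : ∀ {a b : W} (i : a ⟶ b), MW.cof i → MV.cof (F.map i)
  F_trivCof : ∀ {a b : W} (i : a ⟶ b), MW.cof i → MW.weq i → MV.weq (F.map i)

/-- The pushout-product of `i : a ⟶ b` and `k : x ⟶ y` in a monoidal category. -/
noncomputable def pushoutProduct {C : Type*} [Category C] [MonoidalCategory C]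
    [HasPushouts C] {a b x y : C} (i : a ⟶ b) (k : x ⟶ y) :
    pushout (a ◁ k) (i ▷ x) ⟶ b ⊗ y :=
  pushout.desc (i ▷ y) (b ◁ k) (whisker_exchange i k)

/-- A monoidal model structure: a model structure together with the
pushout-product axiom and the unit axiom. -/
structure MonoidalModelStruct (C : Type*) [Category C] [MonoidalCategory C]
    [HasPushouts C] [HasInitial C] extends ModelStruct C where
  pp_cof : ∀ {a b x y : C} (i : a ⟶ b) (k : x ⟶ y), cof i → cof k →
    cof (pushoutProduct i k)
  pp_weq : ∀ {a b x y : C} (i : a ⟶ b) (k : x ⟶ y), cof i → cof k →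
    (weq i ∨ weq k) → weq (pushoutProduct i k)
  unit_axiom : ∀ (x : C), toModelStruct.Cofibrant x → ∀ {Q : C} (q : Q ⟶ 𝟙_ C),
    toModelStruct.Cofibrant Q → weq q → weq ((x ◁ q) ≫ (ρ_ x).hom)

/-- A weak monoidal Quillen adjunction: a Quillen adjunction together with a lax monoidal
structure on the right adjoint, such that the corresponding (doctrinal) oplax monoidal
structure on the left adjoint has a comultiplication which is a weak equivalence on
cofibrant objects, and such that `F` applied to a cofibrant replacement of the unit,
composed with the oplax counit, is a weak equivalence. -/
structure WeakMonoidalQuillenAdjunction {W V : Type*} [Category W] [Category V]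
    [MonoidalCategory W] [MonoidalCategory V]
    [HasPushouts W] [HasPushouts V] [HasInitial W] [HasInitial V]
    (MW : MonoidalModelStruct W) (MV : MonoidalModelStruct V)
    (F : W ⥤ V) (G : V ⥤ W) [F.OplaxMonoidal] [G.LaxMonoidal] extends
      QuillenAdjunction MW.toModelStruct MV.toModelStruct F G where
  compat_counit : adj.homEquiv (𝟙_ W) (𝟙_ V) (OplaxMonoidal.η F) = LaxMonoidal.ε G
  compat_comul : ∀ x y : W, adj.homEquiv (x ⊗ y) (F.obj x ⊗ F.obj y)
      (OplaxMonoidal.δ F x y) =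
    (adj.unit.app x ⊗ₘ adj.unit.app y) ≫ LaxMonoidal.μ G (F.obj x) (F.obj y)
  comul_weq : ∀ x y : W, MW.toModelStruct.Cofibrant x → MW.toModelStruct.Cofibrant y →
    MV.weq (OplaxMonoidal.δ F x y)
  counit_weq : ∀ {Q : W} (q : Q ⟶ 𝟙_ W), MW.toModelStruct.Cofibrant Q → MW.weq q →
    MV.weq (F.map q ≫ OplaxMonoidal.η F)

/-- The canonical comparison map `G([F w, v]_V) ⟶ [w, G v]_W`: the adjunct, under the
internal-hom adjunction of `W`, of the composite
`w ⊗ G([F w, v]) → G(F w) ⊗ G([F w, v]) → G(F w ⊗ [F w, v]) → G v`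
given by whiskering with the adjunction unit, the lax structure map of `G`, and `G`
applied to the evaluation. -/
noncomputable def comparisonMap {W V : Type*} [Category W] [Category V]
    [MonoidalCategory W] [MonoidalCategory V] [MonoidalClosed W] [MonoidalClosed V]
    (F : W ⥤ V) (G : V ⥤ W) [G.LaxMonoidal] (adj : F ⊣ G) (w : W) (v : V) :
    G.obj ((ihom (F.obj w)).obj v) ⟶ (ihom w).obj (G.obj v) :=
  MonoidalClosed.curry
    (adj.unit.app w ▷ G.obj ((ihom (F.obj w)).obj v) ≫
      LaxMonoidal.μ G (F.obj w) ((ihom (F.obj w)).obj v) ≫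
      G.map ((ihom.ev (F.obj w)).app v))

namespace MS

variable {C : Type*} [Category C]

section Basic
variable (M : ModelStruct C)

/-- if `f = g ≫ h` and `f` lifts against `h`, then `f` is a retract of `g`. -/
lemma retract_of_factor_llp {X Y Z : C} {f : X ⟶ Y} {g : X ⟶ Z} {h : Z ⟶ Y}
    (fac : g ≫ h = f) [HasLiftingProperty f h] : IsRetractOfMaps f g := by
  have sq : CommSq g f h (𝟙 Y) := ⟨by simp [fac]⟩
  exact ⟨𝟙 X, 𝟙 X, sq.lift, h, by simp, sq.fac_right, by simp [sq.fac_left], by simp [fac]⟩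

/-- if `f = g ≫ h` and `g` lifts against `f`, then `f` is a retract of `h`. -/
lemma retract_of_factor_rlp {X Y Z : C} {f : X ⟶ Y} {g : X ⟶ Z} {h : Z ⟶ Y}
    (fac : g ≫ h = f) [HasLiftingProperty g f] : IsRetractOfMaps f h := by
  have sq : CommSq (𝟙 X) g f h := ⟨by simp [fac]⟩
  exact ⟨g, sq.lift, 𝟙 Y, 𝟙 Y, sq.fac_left, by simp, by simp [fac], by simp [sq.fac_right]⟩

variable {M}

lemma trivCof_of_llp_fib {X Y : C} {f : X ⟶ Y}
    (H : ∀ {A B : C} (p : A ⟶ B), M.fib p → HasLiftingProperty f p) :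
    M.cof f ∧ M.weq f := by
  obtain ⟨Z, g, h, hgc, hgw, hhf, fac⟩ := M.factor_trivCof_fib f
  haveI := H h hhf
  have hr := retract_of_factor_llp fac
  exact ⟨M.cof_retract f g hr hgc, M.weq_retract f g hr hgw⟩

lemma cof_of_llp_trivFib {X Y : C} {f : X ⟶ Y}
    (H : ∀ {A B : C} (p : A ⟶ B), M.fib p → M.weq p → HasLiftingProperty f p) :
    M.cof f := by
  obtain ⟨Z, g, h, hgc, hhf, hhw, fac⟩ := M.factor_cof_trivFib f
  haveI := H h hhf hhw
  exact M.cof_retract f g (retract_of_factor_llp fac) hgc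

lemma trivFib_of_rlp_cof {X Y : C} {f : X ⟶ Y}
    (H : ∀ {A B : C} (i : A ⟶ B), M.cof i → HasLiftingProperty i f) :
    M.fib f ∧ M.weq f := by
  obtain ⟨Z, g, h, hgc, hhf, hhw, fac⟩ := M.factor_cof_trivFib f
  haveI := H g hgc
  have hr := retract_of_factor_rlp fac
  exact ⟨M.fib_retract f h hr hhf, M.weq_retract f h hr hhw⟩

lemma fib_of_rlp_trivCof {X Y : C} {f : X ⟶ Y}
    (H : ∀ {A B : C} (i : A ⟶ B), M.cof i → M.weq i → HasLiftingProperty i f) :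
    M.fib f := by
  obtain ⟨Z, g, h, hgc, hgw, hhf, fac⟩ := M.factor_trivCof_fib f
  haveI := H g hgc hgw
  exact M.fib_retract f h (retract_of_factor_rlp fac) hhf

lemma cof_of_isIso {X Y : C} (f : X ⟶ Y) [IsIso f] : M.cof f :=
  cof_of_llp_trivFib (fun p _ _ => inferInstance)

lemma weq_of_isIso {X Y : C} (f : X ⟶ Y) [IsIso f] : M.weq f :=
  (trivCof_of_llp_fib (fun p _ => inferInstance)).2

lemma fib_of_isIso {X Y : C} (f : X ⟶ Y) [IsIso f] : M.fib f :=
  fib_of_rlp_trivCof (fun i _ _ => inferInstance)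

lemma cof_comp {X Y Z : C} {f : X ⟶ Y} {g : Y ⟶ Z} (hf : M.cof f) (hg : M.cof g) :
    M.cof (f ≫ g) := by
  apply cof_of_llp_trivFib
  intro A B p hp hw
  haveI := M.lift f p hf hp (Or.inr hw)
  haveI := M.lift g p hg hp (Or.inr hw)
  infer_instance

lemma fib_comp {X Y Z : C} {f : X ⟶ Y} {g : Y ⟶ Z} (hf : M.fib f) (hg : M.fib g) :
    M.fib (f ≫ g) := by
  apply fib_of_rlp_trivCof
  intro A B i hi hw
  haveI := M.lift i f hi hf (Or.inl hw)
  haveI := M.lift i g hi hg (Or.inl hw)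
  infer_instance

/-- pushout stability of cofibrations. -/
lemma cof_of_isPushout {X Y Z P : C} {f : X ⟶ Y} {g : X ⟶ Z} {h : Y ⟶ P} {k : Z ⟶ P}
    (sq : IsPushout f g h k) (hf : M.cof f) : M.cof k := by
  apply cof_of_llp_trivFib
  intro A B p hp hw
  haveI := M.lift f p hf hp (Or.inr hw)
  constructor
  intro top bot s
  have sq2 : CommSq (g ≫ top) f p (h ≫ bot) := ⟨by
    rw [assoc, s.w, ← assoc, ← sq.w, assoc]⟩
  refine ⟨⟨⟨sq.desc sq2.lift top (by rw [sq2.fac_left]), sq.inr_desc _ _ _, ?_⟩⟩⟩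
  apply sq.hom_ext
  · rw [← assoc, sq.inl_desc, sq2.fac_right]
  · rw [← assoc, sq.inr_desc, s.w]

/-- pushout stability of trivial cofibrations. -/
lemma trivCof_of_isPushout {X Y Z P : C} {f : X ⟶ Y} {g : X ⟶ Z} {h : Y ⟶ P} {k : Z ⟶ P}
    (sq : IsPushout f g h k) (hfc : M.cof f) (hfw : M.weq f) : M.cof k ∧ M.weq k := by
  apply trivCof_of_llp_fib
  intro A B p hp
  haveI := M.lift f p hfc hp (Or.inl hfw)
  constructor
  intro top bot s
  have sq2 : CommSq (g ≫ top) f p (h ≫ bot) := ⟨by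
    rw [assoc, s.w, ← assoc, ← sq.w, assoc]⟩
  refine ⟨⟨⟨sq.desc sq2.lift top (by rw [sq2.fac_left]), sq.inr_desc _ _ _, ?_⟩⟩⟩
  apply sq.hom_ext
  · rw [← assoc, sq.inl_desc, sq2.fac_right]
  · rw [← assoc, sq.inr_desc, s.w]

end Basic

end MS
namespace MS
section Homotopy

variable {C : Type*} [Category C] [HasInitial C] [HasPushouts C] [HasBinaryCoproducts C]

lemma isPushout_coprod (x y : C) :
    IsPushout (initial.to y) (initial.to x) coprod.inr (coprod.inl : x ⟶ x ⨿ y) :=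
  IsPushout.of_isColimit (PushoutCocone.IsColimit.mk (initial.hom_ext _ _)
    (fun s => coprod.desc s.inr s.inl)
    (fun s => coprod.inr_desc _ _)
    (fun s => coprod.inl_desc _ _)
    (fun s m h1 h2 => coprod.hom_ext (by rw [h2, coprod.inl_desc]) (by rw [h1, coprod.inr_desc])))

variable {M : ModelStruct C}

lemma cof_inl {x y : C} (hy : M.Cofibrant y) : M.cof (coprod.inl : x ⟶ x ⨿ y) :=
  cof_of_isPushout (isPushout_coprod x y) hy

lemma cof_inr {x y : C} (hx : M.Cofibrant x) : M.cof (coprod.inr : y ⟶ x ⨿ y) :=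
  cof_of_isPushout (isPushout_coprod x y).flip hx

lemma cofibrant_coprod {x y : C} (hx : M.Cofibrant x) (hy : M.Cofibrant y) :
    M.Cofibrant (x ⨿ y) := by
  have : initial.to (x ⨿ y) = initial.to x ≫ coprod.inl := initial.hom_ext _ _
  rw [ModelStruct.Cofibrant, this]
  exact cof_comp hx (cof_inl hy)

lemma llp_coprodMap {a b a' b' X Y : C} {i : a ⟶ b} {i' : a' ⟶ b'} (p : X ⟶ Y)
    [HasLiftingProperty i p] [HasLiftingProperty i' p] :
    HasLiftingProperty (coprod.map i i') p := by
  constructor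
  intro top bot s
  have s1 : CommSq (coprod.inl ≫ top) i p (coprod.inl ≫ bot) :=
    ⟨by rw [assoc, s.w, ← assoc, coprod.inl_map, assoc]⟩
  have s2 : CommSq (coprod.inr ≫ top) i' p (coprod.inr ≫ bot) :=
    ⟨by rw [assoc, s.w, ← assoc, coprod.inr_map, assoc]⟩
  refine ⟨⟨⟨coprod.desc s1.lift s2.lift, ?_, ?_⟩⟩⟩
  · apply coprod.hom_ext
    · rw [← assoc, coprod.inl_map, assoc, coprod.inl_desc, s1.fac_left]
    · rw [← assoc, coprod.inr_map, assoc, coprod.inr_desc, s2.fac_left]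
  · apply coprod.hom_ext
    · rw [← assoc, coprod.inl_desc, s1.fac_right]
    · rw [← assoc, coprod.inr_desc, s2.fac_right]

lemma cof_coprodMap {a b a' b' : C} {i : a ⟶ b} {i' : a' ⟶ b'}
    (hi : M.cof i) (hi' : M.cof i') : M.cof (coprod.map i i') := by
  apply cof_of_llp_trivFib
  intro A B p hp hw
  haveI := M.lift i p hi hp (Or.inr hw)
  haveI := M.lift i' p hi' hp (Or.inr hw)
  exact llp_coprodMap p

lemma trivCof_coprodMap {a b a' b' : C} {i : a ⟶ b} {i' : a' ⟶ b'}
    (hi : M.cof i) (hiw : M.weq i) (hi' : M.cof i') (hiw' : M.weq i') :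
    M.cof (coprod.map i i') ∧ M.weq (coprod.map i i') := by
  apply trivCof_of_llp_fib
  intro A B p hp
  haveI := M.lift i p hi hp (Or.inl hiw)
  haveI := M.lift i' p hi' hp (Or.inl hiw')
  exact llp_coprodMap p


lemma desc_lift_ends {A D Z : C} {j0 j1 : A ⟶ D} {l : D ⟶ Z} {u0 u1 : A ⟶ Z}
    (h : coprod.desc j0 j1 ≫ l = coprod.desc u0 u1) : j0 ≫ l = u0 ∧ j1 ≫ l = u1 := by
  constructor
  · have := congrArg (fun t => coprod.inl ≫ t) h; simpa [coprod.inl_desc, coprod.inr_desc, coprod.inl_desc_assoc, coprod.inr_desc_assoc] using this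
  · have := congrArg (fun t => coprod.inr ≫ t) h; simpa [coprod.inl_desc, coprod.inr_desc, coprod.inl_desc_assoc, coprod.inr_desc_assoc] using this

/-- A (good) cylinder object. -/
structure Cyl (M : ModelStruct C) (x : C) where
  ob : C
  i0 : x ⟶ ob
  i1 : x ⟶ ob
  p : ob ⟶ x
  cof_desc : M.cof (coprod.desc i0 i1)
  weq_p : M.weq p
  i0_p : i0 ≫ p = 𝟙 x
  i1_p : i1 ≫ p = 𝟙 x

lemma exists_stdCyl (M : ModelStruct C) (x : C) : ∃ c : Cyl M x, M.fib c.p := by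
  obtain ⟨Z, g, h, hg, hh, hwh, fac⟩ := M.factor_cof_trivFib (coprod.desc (𝟙 x) (𝟙 x))
  have e : coprod.desc (coprod.inl ≫ g) (coprod.inr ≫ g) = g := by
    apply coprod.hom_ext <;> simp [coprod.inl_desc, coprod.inr_desc, coprod.inl_desc_assoc, coprod.inr_desc_assoc]
  refine ⟨⟨Z, coprod.inl ≫ g, coprod.inr ≫ g, h, by rw [e]; exact hg, hwh, ?_, ?_⟩, hh⟩
  · rw [assoc, fac]; simp [coprod.inl_desc, coprod.inr_desc, coprod.inl_desc_assoc, coprod.inr_desc_assoc]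
  · rw [assoc, fac]; simp [coprod.inl_desc, coprod.inr_desc, coprod.inl_desc_assoc, coprod.inr_desc_assoc]

/-- Left homotopy through some good cylinder. -/
def Htpy (M : ModelStruct C) {x v : C} (f g : x ⟶ v) : Prop :=
  ∃ (c : Cyl M x) (H : c.ob ⟶ v), c.i0 ≫ H = f ∧ c.i1 ≫ H = g

/-- Extension property along trivial cofibrations (substitute for fibrancy). -/
def Inj (M : ModelStruct C) (v : C) : Prop :=
  ∀ ⦃a b : C⦄ (j : a ⟶ b), M.cof j → M.weq j → ∀ t : a ⟶ v, ∃ s : b ⟶ v, j ≫ s = t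

lemma inj_of_fib {z v : C} {q : z ⟶ v} (hq : M.fib q) (hv : Inj M v) : Inj M z := by
  intro a b j hjc hjw t
  obtain ⟨e, he⟩ := hv j hjc hjw (t ≫ q)
  haveI := M.lift j q hjc hq (Or.inl hjw)
  have sq : CommSq t j q e := ⟨by rw [he]⟩
  exact ⟨sq.lift, sq.fac_left⟩

lemma cofibrant_cyl {x : C} (hx : M.Cofibrant x) (c : Cyl M x) : M.Cofibrant c.ob := by
  have : initial.to c.ob = initial.to x ≫ coprod.inl ≫ coprod.desc c.i0 c.i1 :=
    initial.hom_ext _ _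
  rw [ModelStruct.Cofibrant, this]
  exact cof_comp hx (cof_comp (cof_inl hx) c.cof_desc)

lemma cof_i0 {x : C} (hx : M.Cofibrant x) (c : Cyl M x) : M.cof c.i0 := by
  have : c.i0 = coprod.inl ≫ coprod.desc c.i0 c.i1 := by simp [coprod.inl_desc, coprod.inr_desc, coprod.inl_desc_assoc, coprod.inr_desc_assoc]
  rw [this]; exact cof_comp (cof_inl hx) c.cof_desc

lemma cof_i1 {x : C} (hx : M.Cofibrant x) (c : Cyl M x) : M.cof c.i1 := by
  have : c.i1 = coprod.inr ≫ coprod.desc c.i0 c.i1 := by simp [coprod.inl_desc, coprod.inr_desc, coprod.inl_desc_assoc, coprod.inr_desc_assoc]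
  rw [this]; exact cof_comp (cof_inr hx) c.cof_desc

lemma weq_i0 {x : C} (c : Cyl M x) : M.weq c.i0 :=
  M.weq_of_postcomp c.i0 c.p c.weq_p (by rw [c.i0_p]; exact M.weq_id x)

lemma weq_i1 {x : C} (c : Cyl M x) : M.weq c.i1 :=
  M.weq_of_postcomp c.i1 c.p c.weq_p (by rw [c.i1_p]; exact M.weq_id x)

lemma htpy_refl {x v : C} (f : x ⟶ v) : Htpy M f f := by
  obtain ⟨c, -⟩ := exists_stdCyl M x
  exact ⟨c, c.p ≫ f, by rw [← assoc, c.i0_p, id_comp], by rw [← assoc, c.i1_p, id_comp]⟩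

lemma htpy_symm {x v : C} {f g : x ⟶ v} (h : Htpy M f g) : Htpy M g f := by
  obtain ⟨c, H, h0, h1⟩ := h
  have e : coprod.desc c.i1 c.i0 = (coprod.braiding x x).hom ≫ coprod.desc c.i0 c.i1 := by
    apply coprod.hom_ext <;> simp [coprod.braiding, coprod.inl_desc, coprod.inr_desc, coprod.inl_desc_assoc, coprod.inr_desc_assoc]
  refine ⟨⟨c.ob, c.i1, c.i0, c.p, ?_, c.weq_p, c.i1_p, c.i0_p⟩, H, h1, h0⟩
  rw [e]; exact cof_comp (cof_of_isIso _) c.cof_desc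

lemma htpy_postcomp {x v v' : C} {f g : x ⟶ v} (h : Htpy M f g) (k : v ⟶ v') :
    Htpy M (f ≫ k) (g ≫ k) := by
  obtain ⟨c, H, h0, h1⟩ := h
  exact ⟨c, H ≫ k, by rw [← assoc, h0], by rw [← assoc, h1]⟩

/-- transfer a homotopy (into an `Inj` target) onto any prescribed cylinder-like object. -/
lemma htpy_transfer {x v : C} {f g : x ⟶ v} (h : Htpy M f g) (hv : Inj M v)
    {D : C} (j0 j1 : x ⟶ D) (pD : D ⟶ x) (hcof : M.cof (coprod.desc j0 j1))
    (h0 : j0 ≫ pD = 𝟙 x) (h1 : j1 ≫ pD = 𝟙 x) :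
    ∃ H : D ⟶ v, j0 ≫ H = f ∧ j1 ≫ H = g := by
  obtain ⟨c, H, e0, e1⟩ := h
  obtain ⟨Z, k, pf, hkc, hpff, hpfw, fac⟩ := M.factor_cof_trivFib c.p
  have hkw : M.weq k := M.weq_of_postcomp k pf hpfw (by rw [fac]; exact c.weq_p)
  obtain ⟨H', hH'⟩ := hv k hkc hkw H
  haveI := M.lift (coprod.desc j0 j1) pf hcof hpff (Or.inr hpfw)
  have sq : CommSq (coprod.desc (c.i0 ≫ k) (c.i1 ≫ k)) (coprod.desc j0 j1) pf pD := by
    constructor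
    apply coprod.hom_ext
    · rw [coprod.inl_desc_assoc, coprod.inl_desc_assoc, assoc, fac, c.i0_p, h0]
    · rw [coprod.inr_desc_assoc, coprod.inr_desc_assoc, assoc, fac, c.i1_p, h1]
  refine ⟨sq.lift ≫ H', ?_, ?_⟩
  · rw [← assoc, (desc_lift_ends sq.fac_left).1, assoc, hH', e0]
  · rw [← assoc, (desc_lift_ends sq.fac_left).2, assoc, hH', e1]

lemma htpy_precomp {x x' v : C} {f g : x ⟶ v} (e : x' ⟶ x) (hv : Inj M v)
    (h : Htpy M f g) : Htpy M (e ≫ f) (e ≫ g) := by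
  obtain ⟨cx, hcxp⟩ := exists_stdCyl M x
  obtain ⟨H, H0, H1⟩ := htpy_transfer h hv cx.i0 cx.i1 cx.p cx.cof_desc cx.i0_p cx.i1_p
  obtain ⟨ce, -⟩ := exists_stdCyl M x'
  haveI := M.lift (coprod.desc ce.i0 ce.i1) cx.p ce.cof_desc hcxp (Or.inr cx.weq_p)
  have sq : CommSq (coprod.desc (e ≫ cx.i0) (e ≫ cx.i1)) (coprod.desc ce.i0 ce.i1)
      cx.p (ce.p ≫ e) := by
    constructor
    apply coprod.hom_ext
    · rw [coprod.inl_desc_assoc, coprod.inl_desc_assoc, assoc, cx.i0_p, comp_id, ← assoc,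
        ce.i0_p, id_comp]
    · rw [coprod.inr_desc_assoc, coprod.inr_desc_assoc, assoc, cx.i1_p, comp_id, ← assoc,
        ce.i1_p, id_comp]
  have e0 : ce.i0 ≫ sq.lift = e ≫ cx.i0 := (desc_lift_ends sq.fac_left).1
  have e1 : ce.i1 ≫ sq.lift = e ≫ cx.i1 := (desc_lift_ends sq.fac_left).2
  exact ⟨ce, sq.lift ≫ H, by rw [← assoc, e0, assoc, H0], by rw [← assoc, e1, assoc, H1]⟩

end Homotopy
end MS
namespace MS
section Homotopy2

variable {C : Type*} [Category C] [HasInitial C] [HasPushouts C] [HasBinaryCoproducts C]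
variable {M : ModelStruct C}

/-- two maps equalized by a trivial fibration are homotopic. -/
lemma htpy_of_eq_comp {z m y : C} {p : m ⟶ y} (hpf : M.fib p) (hpw : M.weq p)
    {a b : z ⟶ m} (h : a ≫ p = b ≫ p) : Htpy M a b := by
  obtain ⟨c, hcf⟩ := exists_stdCyl M z
  haveI := M.lift (coprod.desc c.i0 c.i1) p c.cof_desc hpf (Or.inr hpw)
  have sq : CommSq (coprod.desc a b) (coprod.desc c.i0 c.i1) p (c.p ≫ (a ≫ p)) := by
    constructor
    apply coprod.hom_ext
    · rw [coprod.inl_desc_assoc, coprod.inl_desc_assoc, ← assoc, c.i0_p, id_comp]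
    · rw [coprod.inr_desc_assoc, coprod.inr_desc_assoc, ← assoc, c.i1_p, id_comp, h]
  exact ⟨c, sq.lift, (desc_lift_ends sq.fac_left).1, (desc_lift_ends sq.fac_left).2⟩

/-- lift a homotopy through a trivial fibration. -/
lemma htpy_lift_trivFib {x z e : C} {p : z ⟶ e} (hpf : M.fib p) (hpw : M.weq p)
    {f g : x ⟶ z} (h : Htpy M (f ≫ p) (g ≫ p)) : Htpy M f g := by
  obtain ⟨c, H, h0, h1⟩ := h
  haveI := M.lift (coprod.desc c.i0 c.i1) p c.cof_desc hpf (Or.inr hpw)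
  have sq : CommSq (coprod.desc f g) (coprod.desc c.i0 c.i1) p H := by
    constructor
    apply coprod.hom_ext
    · simp [h0, coprod.inl_desc, coprod.inr_desc, coprod.inl_desc_assoc, coprod.inr_desc_assoc]
    · simp [h1, coprod.inl_desc, coprod.inr_desc, coprod.inl_desc_assoc, coprod.inr_desc_assoc]
  exact ⟨c, sq.lift, (desc_lift_ends sq.fac_left).1, (desc_lift_ends sq.fac_left).2⟩

lemma htpy_trans {x v : C} (hx : M.Cofibrant x) (hv : Inj M v)
    {f g h : x ⟶ v} (h1 : Htpy M f g) (h2 : Htpy M g h) : Htpy M f h := by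
  obtain ⟨cx, hcxf⟩ := exists_stdCyl M x
  obtain ⟨H1, H10, H11⟩ := htpy_transfer h1 hv cx.i0 cx.i1 cx.p cx.cof_desc cx.i0_p cx.i1_p
  obtain ⟨H2, H20, H21⟩ := htpy_transfer h2 hv cx.i0 cx.i1 cx.p cx.cof_desc cx.i0_p cx.i1_p
  -- glue two copies of the cylinder
  have hi0 : M.cof cx.i0 ∧ M.weq cx.i0 := ⟨cof_i0 hx cx, weq_i0 cx⟩
  have hi1 : M.cof cx.i1 ∧ M.weq cx.i1 := ⟨cof_i1 hx cx, weq_i1 cx⟩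
  let K := pushout cx.i1 cx.i0
  let inlK : cx.ob ⟶ K := pushout.inl _ _
  let inrK : cx.ob ⟶ K := pushout.inr _ _
  have sqK : IsPushout cx.i1 cx.i0 inlK inrK := IsPushout.of_hasPushout cx.i1 cx.i0
  have hinl : M.cof inlK ∧ M.weq inlK := trivCof_of_isPushout sqK.flip hi0.1 hi0.2
  let e0 : x ⟶ K := cx.i0 ≫ inlK
  let e1 : x ⟶ K := cx.i1 ≫ inrK
  let pK : K ⟶ x := pushout.desc cx.p cx.p (by rw [cx.i1_p, cx.i0_p])
  have he0p : e0 ≫ pK = 𝟙 x := by simp [e0, pK, inlK, cx.i0_p, pushout.inl_desc_assoc]; rw [pushout.inl_desc, cx.i0_p]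
  have he1p : e1 ≫ pK = 𝟙 x := by simp [e1, pK, inrK, cx.i1_p, pushout.inr_desc_assoc]; rw [pushout.inr_desc, cx.i1_p]
  have hwpK : M.weq pK := by
    refine M.weq_of_precomp e0 pK (M.weq_comp _ _ hi0.2 hinl.2) ?_
    rw [he0p]; exact M.weq_id x
  -- cofibration property of the two ends
  have hγ : M.cof (coprod.desc e0 inrK : x ⨿ cx.ob ⟶ K) := by
    have w : coprod.desc cx.i0 cx.i1 ≫ inlK = coprod.map (𝟙 x) cx.i0 ≫ coprod.desc e0 inrK := by
      apply coprod.hom_ext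
      · rw [coprod.inl_desc_assoc, coprod.inl_map_assoc, id_comp, coprod.inl_desc]
      · rw [coprod.inr_desc_assoc, coprod.inr_map_assoc, coprod.inr_desc]
        exact sqK.w
    have colim : IsColimit (PushoutCocone.mk inlK (coprod.desc e0 inrK) w) := by
      refine PushoutCocone.IsColimit.mk w (fun s => pushout.desc s.inl (coprod.inr ≫ s.inr) ?_)
        (fun s => pushout.inl_desc _ _ _) (fun s => ?_) (fun s m hm1 hm2 => ?_)
      · have := congrArg (fun t => coprod.inr ≫ t) s.condition
        simpa [coprod.inl_desc, coprod.inr_desc, coprod.inl_desc_assoc, coprod.inr_desc_assoc] using this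
      · apply coprod.hom_ext
        · have hc := congrArg (fun t => coprod.inl ≫ t) s.condition
          simp only [coprod.inl_desc_assoc, coprod.inl_map_assoc, id_comp] at hc
          rw [coprod.inl_desc_assoc]
          show (cx.i0 ≫ pushout.inl _ _) ≫ _ = _
          rw [assoc, pushout.inl_desc]
          exact hc
        · rw [coprod.inr_desc_assoc]
          show pushout.inr _ _ ≫ _ = _
          rw [pushout.inr_desc]
      · apply pushout.hom_ext
        · rw [pushout.inl_desc]; exact hm1
        · rw [pushout.inr_desc]
          have := congrArg (fun t => coprod.inr ≫ t) hm2
          simpa [coprod.inl_desc, coprod.inr_desc, coprod.inl_desc_assoc, coprod.inr_desc_assoc] using this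
    exact cof_of_isPushout (IsPushout.of_isColimit colim) cx.cof_desc
  have hdesc : M.cof (coprod.desc e0 e1) := by
    have e : coprod.desc e0 e1 = coprod.map (𝟙 x) cx.i1 ≫ coprod.desc e0 inrK := by
      apply coprod.hom_ext <;> simp [e1]
    rw [e]
    exact cof_comp (cof_coprodMap (cof_of_isIso _) hi1.1) hγ
  refine ⟨⟨K, e0, e1, pK, hdesc, hwpK, he0p, he1p⟩,
    pushout.desc H1 H2 (by rw [H11, H20]), ?_, ?_⟩
  · show (cx.i0 ≫ pushout.inl _ _) ≫ _ = f
    rw [assoc, pushout.inl_desc, H10]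
  · show (cx.i1 ≫ pushout.inr _ _) ≫ _ = h
    rw [assoc, pushout.inr_desc, H21]

end Homotopy2
end MS
namespace MS
section Quot

variable {C : Type*} [Category C] [HasInitial C] [HasPushouts C] [HasBinaryCoproducts C]
variable {M : ModelStruct C}

lemma htpy_equivalence {x v : C} (hx : M.Cofibrant x) (hv : Inj M v) :
    Equivalence (fun f g : x ⟶ v => Htpy M f g) :=
  ⟨htpy_refl, htpy_symm, htpy_trans hx hv⟩

/-- homotopy classes of maps -/
def HCl (M : ModelStruct C) (x v : C) := Quot (fun f g : x ⟶ v => Htpy M f g)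

lemma hcl_eq_iff {x v : C} (hx : M.Cofibrant x) (hv : Inj M v) {f g : x ⟶ v} :
    (Quot.mk _ f : HCl M x v) = Quot.mk _ g ↔ Htpy M f g := by
  rw [Quot.eq]
  exact (htpy_equivalence hx hv).eqvGen_iff

def postQ {x v v' : C} (k : v ⟶ v') : HCl M x v → HCl M x v' :=
  Quot.lift (fun f => Quot.mk _ (f ≫ k)) (fun f g h => Quot.sound (htpy_postcomp h k))

def preQ {x x' v : C} (e : x' ⟶ x) (hv : Inj M v) : HCl M x v → HCl M x' v :=
  Quot.lift (fun f => Quot.mk _ (e ≫ f)) (fun f g h => Quot.sound (htpy_precomp e hv h))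

lemma postQ_mk {x v v' : C} (k : v ⟶ v') (f : x ⟶ v) :
    (postQ k (Quot.mk _ f) : HCl M x v') = Quot.mk _ (f ≫ k) := rfl

lemma postQ_comp {x v v' v'' : C} (k : v ⟶ v') (k' : v' ⟶ v'') :
    (postQ (x := x) (k ≫ k') : HCl M x v → HCl M x v'') = postQ k' ∘ postQ k := by
  funext q; induction q using Quot.ind with
  | _ f => show Quot.mk _ (f ≫ k ≫ k') = Quot.mk _ ((f ≫ k) ≫ k'); rw [assoc]

/-- postcomposition with a trivial fibration is bijective on homotopy classes. -/
lemma bij_postQ_trivFib {c z e : C} (hc : M.Cofibrant c) (he : Inj M e)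
    {p : z ⟶ e} (hpf : M.fib p) (hpw : M.weq p) :
    Function.Bijective (postQ p : HCl M c z → HCl M c e) := by
  constructor
  · intro a b h
    induction a using Quot.ind with | _ f => ?_
    induction b using Quot.ind with | _ g => ?_
    have h' : Htpy M (f ≫ p) (g ≫ p) := (hcl_eq_iff hc he).1 h
    exact Quot.sound (htpy_lift_trivFib hpf hpw h')
  · intro b
    induction b using Quot.ind with | _ f => ?_
    haveI := M.lift (initial.to c) p hc hpf (Or.inr hpw)
    have sq : CommSq (initial.to z) (initial.to c) p f := ⟨initial.hom_ext _ _⟩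
    exact ⟨Quot.mk _ sq.lift, by rw [postQ_mk, sq.fac_right]⟩

/-- a trivial cofibration between cofibrant `Inj` objects admits a homotopy retraction. -/
lemma exists_htpy_retract {A Z : C} {j : A ⟶ Z} (hjc : M.cof j) (hjw : M.weq j)
    (hA : M.Cofibrant A) (hAI : Inj M A) (hZI : Inj M Z) :
    ∃ r : Z ⟶ A, j ≫ r = 𝟙 A ∧ Htpy M (𝟙 Z) (r ≫ j) := by
  obtain ⟨r, hr⟩ := hAI j hjc hjw (𝟙 A)
  obtain ⟨cA, hcAf⟩ := exists_stdCyl M A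
  -- N := cylinder of A glued onto Z ⨿ Z along j ⨿ j
  let N := pushout (coprod.desc cA.i0 cA.i1) (coprod.map j j)
  let inlN : cA.ob ⟶ N := pushout.inl _ _
  let inrN : (Z ⨿ Z) ⟶ N := pushout.inr _ _
  have sqN : IsPushout (coprod.desc cA.i0 cA.i1) (coprod.map j j) inlN inrN :=
    IsPushout.of_hasPushout _ _
  have hmapjj := trivCof_coprodMap hjc hjw hjc hjw
  have hinlN : M.cof inlN ∧ M.weq inlN := trivCof_of_isPushout sqN.flip hmapjj.1 hmapjj.2
  have hinrN : M.cof inrN := cof_of_isPushout sqN cA.cof_desc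
  have wπ : coprod.desc cA.i0 cA.i1 ≫ (cA.p ≫ j) = coprod.map j j ≫ coprod.desc (𝟙 Z) (𝟙 Z) := by
    apply coprod.hom_ext
    · rw [coprod.inl_desc_assoc, ← assoc, cA.i0_p, id_comp, coprod.inl_map_assoc, coprod.inl_desc, comp_id]
    · rw [coprod.inr_desc_assoc, ← assoc, cA.i1_p, id_comp, coprod.inr_map_assoc, coprod.inr_desc, comp_id]
  let πN : N ⟶ Z := pushout.desc (cA.p ≫ j) (coprod.desc (𝟙 Z) (𝟙 Z)) wπ
  have hπw : M.weq πN := by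
    refine M.weq_of_precomp inlN πN hinlN.2 ?_
    show M.weq (pushout.inl _ _ ≫ πN)
    rw [pushout.inl_desc]
    exact M.weq_comp _ _ cA.weq_p hjw
  obtain ⟨C', ιf, pf, hιfc, hpff, hpfw, facf⟩ := M.factor_cof_trivFib πN
  have hιfw : M.weq ιf := M.weq_of_postcomp ιf pf hpfw (by rw [facf]; exact hπw)
  have wValN : coprod.desc cA.i0 cA.i1 ≫ (cA.p ≫ j) = coprod.map j j ≫ coprod.desc (𝟙 Z) (r ≫ j) := by
    apply coprod.hom_ext
    · rw [coprod.inl_desc_assoc, ← assoc, cA.i0_p, id_comp, coprod.inl_map_assoc, coprod.inl_desc, comp_id]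
    · rw [coprod.inr_desc_assoc, ← assoc, cA.i1_p, id_comp, coprod.inr_map_assoc, coprod.inr_desc,
        ← assoc, hr, id_comp]
  obtain ⟨H, hH⟩ := hZI ιf hιfc hιfw (pushout.desc (cA.p ≫ j) (coprod.desc (𝟙 Z) (r ≫ j)) wValN)
  have hdesc : coprod.desc (coprod.inl ≫ inrN ≫ ιf) (coprod.inr ≫ inrN ≫ ιf) = inrN ≫ ιf := by
    apply coprod.hom_ext <;> simp [coprod.inl_desc, coprod.inr_desc, coprod.inl_desc_assoc, coprod.inr_desc_assoc]
  refine ⟨r, hr, ⟨⟨C', coprod.inl ≫ inrN ≫ ιf, coprod.inr ≫ inrN ≫ ιf, pf, ?_, hpfw, ?_, ?_⟩,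
    H, ?_, ?_⟩⟩
  · rw [hdesc]; exact cof_comp hinrN hιfc
  · rw [assoc, assoc, facf]
    show coprod.inl ≫ pushout.inr _ _ ≫ πN = 𝟙 Z
    rw [pushout.inr_desc, coprod.inl_desc]
  · rw [assoc, assoc, facf]
    show coprod.inr ≫ pushout.inr _ _ ≫ πN = 𝟙 Z
    rw [pushout.inr_desc, coprod.inr_desc]
  · rw [assoc, assoc, hH]
    show coprod.inl ≫ pushout.inr _ _ ≫ _ = 𝟙 Z
    rw [pushout.inr_desc, coprod.inl_desc]
  · rw [assoc, assoc, hH]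
    show coprod.inr ≫ pushout.inr _ _ ≫ _ = r ≫ j
    rw [pushout.inr_desc, coprod.inr_desc]

/-- postcomposition with a trivial cofibration (between cofibrant Inj objects)
is bijective on homotopy classes. -/
lemma bij_postQ_trivCof {c A Z : C} (hc : M.Cofibrant c) {j : A ⟶ Z}
    (hjc : M.cof j) (hjw : M.weq j) (hA : M.Cofibrant A) (hAI : Inj M A)
    (hZ : M.Cofibrant Z) (hZI : Inj M Z) :
    Function.Bijective (postQ j : HCl M c A → HCl M c Z) := by
  obtain ⟨r, hr, hH⟩ := exists_htpy_retract hjc hjw hA hAI hZI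
  constructor
  · intro a b h
    induction a using Quot.ind with | _ f => ?_
    induction b using Quot.ind with | _ g => ?_
    have h' : Htpy M (f ≫ j) (g ≫ j) := (hcl_eq_iff hc hZI).1 h
    have h'' := htpy_postcomp h' r
    rw [assoc, assoc, hr, comp_id, comp_id] at h''
    exact Quot.sound h''
  · intro b
    induction b using Quot.ind with | _ f => ?_
    refine ⟨Quot.mk _ (f ≫ r), ?_⟩
    rw [postQ_mk]
    apply Quot.sound
    have := htpy_precomp f hZI hH
    rw [comp_id] at this
    apply htpy_symm
    rw [assoc]
    exact this

/-- precomposition with a trivial fibration is bijective on homotopy classes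
(cofibrant target of the map). -/
lemma bij_preQ_trivFib {m y v : C} {q : m ⟶ y} (hqf : M.fib q) (hqw : M.weq q)
    (hy : M.Cofibrant y) (hv : Inj M v) :
    Function.Bijective (preQ q hv : HCl M y v → HCl M m v) := by
  haveI := M.lift (initial.to y) q hy hqf (Or.inr hqw)
  have sq : CommSq (initial.to m) (initial.to y) q (𝟙 y) := ⟨initial.hom_ext _ _⟩
  set s : y ⟶ m := sq.lift with hs
  have hsq : s ≫ q = 𝟙 y := sq.fac_right
  have hqs : Htpy M (q ≫ s) (𝟙 m) :=
    htpy_of_eq_comp hqf hqw (by rw [assoc, hsq, comp_id, id_comp])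
  have hinv1 : ∀ a : HCl M y v, preQ s hv (preQ q hv a) = a := by
    intro a; induction a using Quot.ind with | _ f => ?_
    show Quot.mk _ (s ≫ q ≫ f) = Quot.mk _ f
    rw [← assoc, hsq, id_comp]
  have hinv2 : ∀ a : HCl M m v, preQ q hv (preQ s hv a) = a := by
    intro a; induction a using Quot.ind with | _ g => ?_
    show Quot.mk _ (q ≫ s ≫ g) = Quot.mk _ g
    apply Quot.sound
    have := htpy_postcomp hqs g
    rw [assoc, id_comp] at this
    exact this
  exact Function.bijective_iff_has_inverse.2 ⟨preQ s hv, hinv1, hinv2⟩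

/-- precomposition with a trivial cofibration (cofibrant source) is bijective on
homotopy classes into an `Inj` object. -/
lemma bij_preQ_trivCof {x m v : C} {j : x ⟶ m} (hjc : M.cof j) (hjw : M.weq j)
    (hx : M.Cofibrant x) (hv : Inj M v) :
    Function.Bijective (preQ j hv : HCl M m v → HCl M x v) := by
  constructor
  · intro a b h
    induction a using Quot.ind with | _ u => ?_
    induction b using Quot.ind with | _ u' => ?_
    have h' : Htpy M (j ≫ u) (j ≫ u') := (hcl_eq_iff hx hv).1 h
    obtain ⟨cy, H, h0, h1⟩ := h'
    -- glue the cylinder onto m ⨿ m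
    let N := pushout (coprod.desc cy.i0 cy.i1) (coprod.map j j)
    let inlN : cy.ob ⟶ N := pushout.inl _ _
    let inrN : (m ⨿ m) ⟶ N := pushout.inr _ _
    have sqN : IsPushout (coprod.desc cy.i0 cy.i1) (coprod.map j j) inlN inrN :=
      IsPushout.of_hasPushout _ _
    have hmapjj := trivCof_coprodMap hjc hjw hjc hjw
    have hinlN : M.cof inlN ∧ M.weq inlN := trivCof_of_isPushout sqN.flip hmapjj.1 hmapjj.2
    have hinrN : M.cof inrN := cof_of_isPushout sqN cy.cof_desc
    have wπ : coprod.desc cy.i0 cy.i1 ≫ (cy.p ≫ j) =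
        coprod.map j j ≫ coprod.desc (𝟙 m) (𝟙 m) := by
      apply coprod.hom_ext
      · rw [coprod.inl_desc_assoc, ← assoc, cy.i0_p, id_comp, coprod.inl_map_assoc,
          coprod.inl_desc, comp_id]
      · rw [coprod.inr_desc_assoc, ← assoc, cy.i1_p, id_comp, coprod.inr_map_assoc,
          coprod.inr_desc, comp_id]
    let πN : N ⟶ m := pushout.desc (cy.p ≫ j) (coprod.desc (𝟙 m) (𝟙 m)) wπ
    have hπw : M.weq πN := by
      refine M.weq_of_precomp inlN πN hinlN.2 ?_
      show M.weq (pushout.inl _ _ ≫ πN)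
      rw [pushout.inl_desc]
      exact M.weq_comp _ _ cy.weq_p hjw
    have hdesc : coprod.desc (coprod.inl ≫ inrN) (coprod.inr ≫ inrN) = inrN := by
      apply coprod.hom_ext <;> simp [coprod.inl_desc, coprod.inr_desc, coprod.inl_desc_assoc, coprod.inr_desc_assoc]
    have wH : coprod.desc cy.i0 cy.i1 ≫ H = coprod.map j j ≫ coprod.desc u u' := by
      apply coprod.hom_ext
      · rw [coprod.inl_desc_assoc, h0, coprod.inl_map_assoc, coprod.inl_desc]
      · rw [coprod.inr_desc_assoc, h1, coprod.inr_map_assoc, coprod.inr_desc]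
    apply Quot.sound
    refine ⟨⟨N, coprod.inl ≫ inrN, coprod.inr ≫ inrN, πN, by rw [hdesc]; exact hinrN, hπw,
      ?_, ?_⟩, pushout.desc H (coprod.desc u u') wH, ?_, ?_⟩
    · rw [assoc]
      show coprod.inl ≫ pushout.inr _ _ ≫ πN = 𝟙 m
      rw [pushout.inr_desc, coprod.inl_desc]
    · rw [assoc]
      show coprod.inr ≫ pushout.inr _ _ ≫ πN = 𝟙 m
      rw [pushout.inr_desc, coprod.inr_desc]
    · rw [assoc]
      show coprod.inl ≫ pushout.inr _ _ ≫ _ = u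
      rw [pushout.inr_desc, coprod.inl_desc]
    · rw [assoc]
      show coprod.inr ≫ pushout.inr _ _ ≫ _ = u'
      rw [pushout.inr_desc, coprod.inr_desc]
  · intro b
    induction b using Quot.ind with | _ g => ?_
    obtain ⟨gext, hgext⟩ := hv j hjc hjw g
    exact ⟨Quot.mk _ gext, by show Quot.mk _ (j ≫ gext) = _; rw [hgext]⟩

end Quot
end MS
namespace MS
section Whitehead

variable {C : Type*} [Category C] [HasInitial C] [HasPushouts C] [HasBinaryCoproducts C]
variable {M : ModelStruct C}

/-- KERNEL: a fibration with a strict section whose other composite is homotopic to the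
identity is a weak equivalence (cofibrant total object). -/
lemma weq_fib_of_section_htpy {T Y : C} {q : T ⟶ Y} (hqf : M.fib q) (hT : M.Cofibrant T)
    {σ : Y ⟶ T} (hσ : σ ≫ q = 𝟙 Y) (h : Htpy M (q ≫ σ) (𝟙 T)) : M.weq q := by
  obtain ⟨cyl, H, h0, h1⟩ := h
  have hi0c : M.cof cyl.i0 := cof_i0 hT cyl
  have hi0w : M.weq cyl.i0 := weq_i0 cyl
  have hi1w : M.weq cyl.i1 := weq_i1 cyl
  have hHw : M.weq H := M.weq_of_precomp cyl.i1 H hi1w (by rw [h1]; exact M.weq_id T)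
  haveI := M.lift cyl.i0 q hi0c hqf (Or.inl hi0w)
  have sq : CommSq (𝟙 T) cyl.i0 q (H ≫ q) := ⟨by rw [id_comp, ← assoc, h0, assoc, hσ, comp_id]⟩
  refine M.weq_retract q H ⟨cyl.i0, sq.lift, σ, q, sq.fac_left, hσ, h0, ?_⟩ hHw
  rw [sq.fac_right]

lemma cofibrant_of_factor {X Y : C} {g : X ⟶ Y} (hX : M.Cofibrant X) (hg : M.cof g) :
    M.Cofibrant Y := by
  have : initial.to Y = initial.to X ≫ g := initial.hom_ext _ _
  rw [ModelStruct.Cofibrant, this]; exact cof_comp hX hg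

/-- Whitehead-style detection of weak equivalences. -/
lemma weq_of_postQ_bij {D E : C} (φ : D ⟶ E) (hD : Inj M D) (hE : Inj M E)
    (hbij : ∀ (c : C), M.Cofibrant c →
      Function.Bijective (postQ φ : HCl M c D → HCl M c E)) : M.weq φ := by
  -- cofibrant replacement of D
  obtain ⟨QD, g0, p, hg0c, hpf, hpw, hfac0⟩ := M.factor_cof_trivFib (initial.to D)
  have hQDc : M.Cofibrant QD := by
    have : initial.to QD = g0 := initial.hom_ext _ _
    rw [ModelStruct.Cofibrant, this]; exact hg0c
  have hQDI : Inj M QD := inj_of_fib hpf hD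
  -- factor p ≫ φ
  obtain ⟨Z', j', q', hj'c, hj'w, hq'f, hfac1⟩ := M.factor_trivCof_fib (p ≫ φ)
  have hZ'c : M.Cofibrant Z' := cofibrant_of_factor hQDc hj'c
  have hZ'I : Inj M Z' := inj_of_fib hq'f hE
  -- cofibrant replacement of E
  obtain ⟨QE, g1, pE, hg1c, hpEf, hpEw, hfac2⟩ := M.factor_cof_trivFib (initial.to E)
  have hQEc : M.Cofibrant QE := by
    have : initial.to QE = g1 := initial.hom_ext _ _
    rw [ModelStruct.Cofibrant, this]; exact hg1c
  have hQEI : Inj M QE := inj_of_fib hpEf hE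
  -- lift q' through pE
  haveI := M.lift (initial.to Z') pE hZ'c hpEf (Or.inr hpEw)
  have squ : CommSq (initial.to QE) (initial.to Z') pE q' := ⟨initial.hom_ext _ _⟩
  set u : Z' ⟶ QE := squ.lift with hu
  have huq : u ≫ pE = q' := squ.fac_right
  -- u is postQ-bijective
  have hu_bij : ∀ (c : C), M.Cofibrant c →
      Function.Bijective (postQ u : HCl M c Z' → HCl M c QE) := by
    intro c hc
    have b1 : Function.Bijective (postQ (p ≫ φ) : HCl M c QD → HCl M c E) := by
      rw [postQ_comp]
      exact (hbij c hc).comp (bij_postQ_trivFib hc hD hpf hpw)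
    have b2 : Function.Bijective (postQ q' : HCl M c Z' → HCl M c E) := by
      have e : (postQ (p ≫ φ) : HCl M c QD → HCl M c E) = postQ q' ∘ postQ j' := by
        rw [← postQ_comp, hfac1]
      rw [e] at b1
      exact (Function.Bijective.of_comp_iff (postQ q')
        (bij_postQ_trivCof hc hj'c hj'w hQDc hQDI hZ'c hZ'I)).1 b1
    have e2 : (postQ q' : HCl M c Z' → HCl M c E) = postQ pE ∘ postQ u := by
      rw [← postQ_comp, huq]
    rw [e2] at b2
    exact (Function.Bijective.of_comp_iff' (bij_postQ_trivFib hc hE hpEf hpEw)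
      (postQ u)).1 b2
  -- extract homotopy inverse data for u
  obtain ⟨sclass, hs⟩ := (hu_bij QE hQEc).2 (Quot.mk _ (𝟙 QE))
  induction sclass using Quot.ind with | _ s => ?_
  have hsu : Htpy M (s ≫ u) (𝟙 QE) := (hcl_eq_iff hQEc hQEI).1 hs
  have hus : Htpy M (u ≫ s) (𝟙 Z') := by
    have h1 : Htpy M (u ≫ s ≫ u) (u ≫ 𝟙 QE) := htpy_precomp u hQEI hsu
    have : postQ u (Quot.mk _ (u ≫ s) : HCl M Z' Z') =
        postQ u (Quot.mk _ (𝟙 Z') : HCl M Z' Z') := by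
      rw [postQ_mk, postQ_mk, assoc, id_comp]
      exact (hcl_eq_iff hZ'c hQEI).2 (by rw [comp_id] at h1; exact h1)
    exact (hcl_eq_iff hZ'c hZ'I).1 ((hu_bij Z' hZ'c).1 this)
  -- factor u = k ≫ q
  obtain ⟨T, k, q, hkc, hkw, hqf, hfacu⟩ := M.factor_trivCof_fib u
  have hTc : M.Cofibrant T := cofibrant_of_factor hZ'c hkc
  have hTI : Inj M T := inj_of_fib hqf hQEI
  obtain ⟨rk, hrk, hHk⟩ := exists_htpy_retract hkc hkw hZ'c hZ'I hTI
  -- q is a homotopy equivalence with inverse t = s ≫ k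
  have htq : Htpy M ((s ≫ k) ≫ q) (𝟙 QE) := by rw [assoc, hfacu]; exact hsu
  have hqt : Htpy M (q ≫ s ≫ k) (𝟙 T) := by
    have a1 : Htpy M (𝟙 T ≫ q) ((rk ≫ k) ≫ q) := htpy_postcomp hHk q
    rw [id_comp, assoc, hfacu] at a1
    -- q ~ rk ≫ u
    have a2 : Htpy M (q ≫ (s ≫ k)) ((rk ≫ u) ≫ (s ≫ k)) := htpy_postcomp a1 (s ≫ k)
    have a3 : Htpy M (rk ≫ (u ≫ s)) (rk ≫ 𝟙 Z') := htpy_precomp rk hZ'I hus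
    have a4 : Htpy M ((rk ≫ (u ≫ s)) ≫ k) ((rk ≫ 𝟙 Z') ≫ k) := htpy_postcomp a3 k
    have a5 : Htpy M (rk ≫ k) (𝟙 T) := htpy_symm hHk
    refine htpy_trans hTc hTI a2 (htpy_trans hTc hTI ?_ (htpy_trans hTc hTI a4 ?_))
    · show Htpy M ((rk ≫ u) ≫ s ≫ k) ((rk ≫ u ≫ s) ≫ k)
      rw [assoc, assoc, assoc]
      exact htpy_refl _
    · rw [comp_id]
      exact a5
  -- strictify the section
  obtain ⟨cyl2, H2, h20, h21⟩ := htq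
  have hi0c2 : M.cof cyl2.i0 := cof_i0 hQEc cyl2
  have hi0w2 : M.weq cyl2.i0 := weq_i0 cyl2
  haveI := M.lift cyl2.i0 q hi0c2 hqf (Or.inl hi0w2)
  have sq2 : CommSq (s ≫ k) cyl2.i0 q H2 := ⟨by rw [h20]⟩
  set σ : QE ⟶ T := cyl2.i1 ≫ sq2.lift with hσdef
  have hσq : σ ≫ q = 𝟙 QE := by rw [hσdef, assoc, sq2.fac_right, h21]
  have htσ : Htpy M (s ≫ k) σ := ⟨cyl2, sq2.lift, sq2.fac_left, rfl⟩
  have hqσ : Htpy M (q ≫ σ) (𝟙 T) := by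
    have b1 : Htpy M (q ≫ (s ≫ k)) (q ≫ σ) := htpy_precomp q hTI htσ
    exact htpy_trans hTc hTI (htpy_symm b1) hqt
  have hqweq : M.weq q := weq_fib_of_section_htpy hqf hTc hσq hqσ
  -- conclude
  have huw : M.weq u := by rw [← hfacu]; exact M.weq_comp _ _ hkw hqweq
  have hq'w : M.weq q' := by rw [← huq]; exact M.weq_comp _ _ huw hpEw
  have hpφw : M.weq (p ≫ φ) := by rw [← hfac1]; exact M.weq_comp _ _ hj'w hq'w
  exact M.weq_of_precomp p φ hpw hpφw

end Whitehead
end MS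
namespace MS
section Transport

variable {C : Type*} {C' : Type*} [Category C] [Category C']
variable [HasInitial C] [HasPushouts C] [HasBinaryCoproducts C]
variable [HasInitial C'] [HasPushouts C'] [HasBinaryCoproducts C']
variable {M : ModelStruct C} {M' : ModelStruct C'} {L : C ⥤ C'}

/-- Ken Brown: a cof-preserving, trivcof-to-weq functor preserves weak equivalences
between cofibrant objects. -/
lemma kenBrown (hLc : ∀ {a b : C} (i : a ⟶ b), M.cof i → M'.cof (L.map i))
    (hLw : ∀ {a b : C} (i : a ⟶ b), M.cof i → M.weq i → M'.weq (L.map i))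
    {a b : C} (f : a ⟶ b) (ha : M.Cofibrant a) (hb : M.Cofibrant b) (hw : M.weq f) :
    M'.weq (L.map f) := by
  obtain ⟨Z, g, h, hgc, hhf, hhw, fac⟩ := M.factor_cof_trivFib (coprod.desc f (𝟙 b))
  have hj1c : M.cof (coprod.inl ≫ g) := cof_comp (cof_inl hb) hgc
  have hj2c : M.cof (coprod.inr ≫ g) := cof_comp (cof_inr ha) hgc
  have e1 : (coprod.inl ≫ g) ≫ h = f := by rw [assoc, fac, coprod.inl_desc]
  have e2 : (coprod.inr ≫ g) ≫ h = 𝟙 b := by rw [assoc, fac, coprod.inr_desc]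
  have hj1w : M.weq (coprod.inl ≫ g) :=
    M.weq_of_postcomp _ h hhw (by rw [e1]; exact hw)
  have hj2w : M.weq (coprod.inr ≫ g) :=
    M.weq_of_postcomp _ h hhw (by rw [e2]; exact M.weq_id b)
  have hLh : M'.weq (L.map h) := by
    apply M'.weq_of_precomp (L.map (coprod.inr ≫ g)) (L.map h) (hLw _ hj2c hj2w)
    rw [← L.map_comp, e2, L.map_id]
    exact M'.weq_id _
  have hc : M'.weq (L.map (coprod.inl ≫ g) ≫ L.map h) :=
    M'.weq_comp _ _ (hLw _ hj1c hj1w) hLh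
  rw [← L.map_comp, e1] at hc
  exact hc

lemma map_desc_cof (hLc : ∀ {a b : C} (i : a ⟶ b), M.cof i → M'.cof (L.map i))
    {x : C} [PreservesColimit (pair x x) L] (c : Cyl M x) :
    M'.cof (coprod.desc (L.map c.i0) (L.map c.i1)) := by
  haveI : IsIso (coprodComparison L x x) := by
    rw [← PreservesColimitPair.iso_hom]
    infer_instance
  have e : coprod.desc (L.map c.i0) (L.map c.i1) =
      coprodComparison L x x ≫ L.map (coprod.desc c.i0 c.i1) := by
    apply coprod.hom_ext
    · rw [coprod.inl_desc, ← assoc, coprodComparison_inl, ← L.map_comp, coprod.inl_desc]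
    · rw [coprod.inr_desc, ← assoc, coprodComparison_inr, ← L.map_comp, coprod.inr_desc]
  rw [e]
  exact cof_comp (cof_of_isIso _) (hLc _ c.cof_desc)

/-- image of a good cylinder under a left-Quillen-like functor. -/
noncomputable def mapCyl (hLc : ∀ {a b : C} (i : a ⟶ b), M.cof i → M'.cof (L.map i))
    (hLw : ∀ {a b : C} (i : a ⟶ b), M.cof i → M.weq i → M'.weq (L.map i))
    {x : C} (hx : M.Cofibrant x) [PreservesColimit (pair x x) L] (c : Cyl M x) :
    Cyl M' (L.obj x) where
  ob := L.obj c.ob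
  i0 := L.map c.i0
  i1 := L.map c.i1
  p := L.map c.p
  cof_desc := map_desc_cof hLc c
  weq_p := kenBrown hLc hLw c.p (cofibrant_cyl hx c) hx c.weq_p
  i0_p := by rw [← L.map_comp, c.i0_p, L.map_id]
  i1_p := by rw [← L.map_comp, c.i1_p, L.map_id]

lemma htpy_map (hLc : ∀ {a b : C} (i : a ⟶ b), M.cof i → M'.cof (L.map i))
    (hLw : ∀ {a b : C} (i : a ⟶ b), M.cof i → M.weq i → M'.weq (L.map i))
    {x v : C} (hx : M.Cofibrant x) [PreservesColimit (pair x x) L]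
    {f g : x ⟶ v} (h : Htpy M f g) : Htpy M' (L.map f) (L.map g) := by
  obtain ⟨c, H, h0, h1⟩ := h
  refine ⟨mapCyl hLc hLw hx c, L.map H, ?_, ?_⟩
  · show L.map c.i0 ≫ L.map H = L.map f
    rw [← L.map_comp, h0]
  · show L.map c.i1 ≫ L.map H = L.map g
    rw [← L.map_comp, h1]

/-- a functor preserving the initial object and cofibrations preserves cofibrant objects. -/
lemma cofibrant_map (hLc : ∀ {a b : C} (i : a ⟶ b), M.cof i → M'.cof (L.map i))
    (hinit : IsInitial (L.obj (⊥_ C))) {x : C} (hx : M.Cofibrant x) :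
    M'.Cofibrant (L.obj x) := by
  have e : initial.to (L.obj x) = initial.to (L.obj (⊥_ C)) ≫ L.map (initial.to x) :=
    initial.hom_ext _ _
  have e2 : initial.to (L.obj (⊥_ C)) = (initialIsInitial.uniqueUpToIso hinit).hom :=
    initial.hom_ext _ _
  rw [ModelStruct.Cofibrant, e, e2]
  exact cof_comp (cof_of_isIso _) (hLc _ hx)

end Transport
end MS
namespace MS
section MonoidalLayer

variable {C : Type*} [Category C] [MonoidalCategory C] [HasPushouts C] [HasInitial C]
  [HasBinaryCoproducts C] [MonoidalClosed C] [SymmetricCategory C]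

noncomputable def isInitialTensorLeft (z : C) : IsInitial (z ⊗ (⊥_ C)) :=
  letI := (ihom.adjunction z).leftAdjoint_preservesColimits
  initialIsInitial.isInitialObj (tensorLeft z) _

noncomputable def isInitialTensorRight (x : C) : IsInitial ((⊥_ C) ⊗ x) :=
  (isInitialTensorLeft x).ofIso (β_ x (⊥_ C))

variable {M : MonoidalModelStruct C}

lemma cof_whiskerLeft {z : C} (hz : M.toModelStruct.Cofibrant z) {x y : C} {k : x ⟶ y}
    (hk : M.cof k) : M.cof (z ◁ k) := by
  have IIx := isInitialTensorRight (C := C) x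
  have IIy := isInitialTensorRight (C := C) y
  have hcond : ((⊥_ C) ◁ k) ≫ IIy.to (z ⊗ x) = ((initial.to z) ▷ x) ≫ 𝟙 (z ⊗ x) :=
    IIx.hom_ext _ _
  haveI : IsIso (pushout.inr ((⊥_ C) ◁ k) ((initial.to z) ▷ x)) := by
    refine ⟨⟨pushout.desc (IIy.to _) (𝟙 _) hcond, pushout.inr_desc _ _ _, ?_⟩⟩
    apply pushout.hom_ext
    · exact IIy.hom_ext _ _
    · rw [← assoc, pushout.inr_desc, id_comp, comp_id]
  have e : z ◁ k = pushout.inr _ _ ≫ pushoutProduct (initial.to z) k :=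
    (pushout.inr_desc _ _ _).symm
  rw [e]
  exact cof_comp (cof_of_isIso _) (M.pp_cof _ _ hz hk)

lemma weq_whiskerLeft {z : C} (hz : M.toModelStruct.Cofibrant z) {x y : C} {k : x ⟶ y}
    (hk : M.cof k) (hkw : M.weq k) : M.weq (z ◁ k) := by
  have IIx := isInitialTensorRight (C := C) x
  have IIy := isInitialTensorRight (C := C) y
  have hcond : ((⊥_ C) ◁ k) ≫ IIy.to (z ⊗ x) = ((initial.to z) ▷ x) ≫ 𝟙 (z ⊗ x) :=
    IIx.hom_ext _ _
  haveI : IsIso (pushout.inr ((⊥_ C) ◁ k) ((initial.to z) ▷ x)) := by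
    refine ⟨⟨pushout.desc (IIy.to _) (𝟙 _) hcond, pushout.inr_desc _ _ _, ?_⟩⟩
    apply pushout.hom_ext
    · exact IIy.hom_ext _ _
    · rw [← assoc, pushout.inr_desc, id_comp, comp_id]
  have e : z ◁ k = pushout.inr _ _ ≫ pushoutProduct (initial.to z) k :=
    (pushout.inr_desc _ _ _).symm
  rw [e]
  exact M.weq_comp _ _ (weq_of_isIso _) (M.pp_weq _ _ hz hk (Or.inr hkw))

lemma cofibrant_tensor {z x : C} (hz : M.toModelStruct.Cofibrant z)
    (hx : M.toModelStruct.Cofibrant x) : M.toModelStruct.Cofibrant (z ⊗ x) := by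
  have II1 := isInitialTensorRight (C := C) x
  have II2 := isInitialTensorLeft (C := C) z
  have II0 := isInitialTensorRight (C := C) (⊥_ C)
  have hd : ((⊥_ C) ◁ (initial.to x)) ≫ II1.to (⊥_ C) =
      ((initial.to z) ▷ (⊥_ C)) ≫ II2.to (⊥_ C) := II0.hom_ext _ _
  haveI : IsIso (initial.to (pushout ((⊥_ C) ◁ (initial.to x)) ((initial.to z) ▷ (⊥_ C)))) := by
    refine ⟨⟨pushout.desc (II1.to _) (II2.to _) hd, initial.hom_ext _ _, ?_⟩⟩
    apply pushout.hom_ext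
    · exact II1.hom_ext _ _
    · exact II2.hom_ext _ _
  have e : initial.to (z ⊗ x) =
      initial.to _ ≫ pushoutProduct (initial.to z) (initial.to x) := initial.hom_ext _ _
  rw [ModelStruct.Cofibrant, e]
  exact cof_comp (cof_of_isIso _) (M.pp_cof _ _ hz hx)

/-- `Inj` for internal homs out of cofibrant objects. -/
lemma inj_ihom_obj {z Y : C} (hz : M.toModelStruct.Cofibrant z)
    (hY : Inj M.toModelStruct Y) : Inj M.toModelStruct ((ihom z).obj Y) := by
  intro a b j hjc hjw t
  obtain ⟨s1, hs1⟩ := hY (z ◁ j) (cof_whiskerLeft hz hjc) (weq_whiskerLeft hz hjc hjw)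
    (MonoidalClosed.uncurry t)
  refine ⟨MonoidalClosed.curry s1, ?_⟩
  rw [← MonoidalClosed.curry_natural_left, hs1, MonoidalClosed.curry_uncurry]

end MonoidalLayer

section InjTerminal
variable {C : Type*} [Category C] [HasTerminal C] {M : ModelStruct C}

lemma inj_of_fibrant {v : C} (hv : M.fib (terminal.from v)) : Inj M v := by
  intro a b j hjc hjw t
  haveI := M.lift j (terminal.from v) hjc hv (Or.inl hjw)
  have sq : CommSq t j (terminal.from v) (terminal.from b) := ⟨terminal.hom_ext _ _⟩
  exact ⟨sq.lift, sq.fac_left⟩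

end InjTerminal

section InjAdj
variable {W V : Type*} [Category W] [Category V] {F : W ⥤ V} {G : V ⥤ W}
variable {MW : ModelStruct W} {MV : ModelStruct V}

lemma inj_G_obj (adj : F ⊣ G)
    (F_cof : ∀ {a b : W} (i : a ⟶ b), MW.cof i → MV.cof (F.map i))
    (F_trivCof : ∀ {a b : W} (i : a ⟶ b), MW.cof i → MW.weq i → MV.weq (F.map i))
    {X : V} (hX : Inj MV X) : Inj MW (G.obj X) := by
  intro a b j hjc hjw t
  obtain ⟨s1, hs1⟩ := hX (F.map j) (F_cof j hjc) (F_trivCof j hjc hjw)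
    ((adj.homEquiv a X).symm t)
  refine ⟨adj.homEquiv b X s1, ?_⟩
  rw [← adj.homEquiv_naturality_left, hs1, Equiv.apply_symm_apply]

end InjAdj
end MS

open MS

theorem comparisonMap_weq_of_cofibrant_fibrant
    {W V : Type*} [Category W] [Category V]
    [MonoidalCategory W] [MonoidalCategory V]
    [SymmetricCategory W] [SymmetricCategory V]
    [MonoidalClosed W] [MonoidalClosed V]
    [HasPushouts W] [HasPushouts V] [HasInitial W] [HasInitial V] [HasTerminal V]
    (MW : MonoidalModelStruct W) (MV : MonoidalModelStruct V)
    (F : W ⥤ V) (G : V ⥤ W) [F.OplaxMonoidal] [G.LaxMonoidal]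
    (A : WeakMonoidalQuillenAdjunction MW MV F G)
    (w : W) (hw : MW.toModelStruct.Cofibrant w)
    (v : V) (hv : MV.toModelStruct.Fibrant v) :
    MW.weq (comparisonMap F G A.adj w v) := by
  letI : HasBinaryCoproducts W := hasBinaryCoproducts_of_hasInitial_and_pushouts W
  letI : HasBinaryCoproducts V := hasBinaryCoproducts_of_hasInitial_and_pushouts V
  haveI hPF : PreservesColimitsOfSize.{0,0} F := A.adj.leftAdjoint_preservesColimits
  haveI := (ihom.adjunction (F.obj w)).leftAdjoint_preservesColimits
  haveI := (ihom.adjunction w).leftAdjoint_preservesColimits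
  have hFinit : IsInitial (F.obj (⊥_ W)) := initialIsInitial.isInitialObj F _
  have hFwCof : MV.toModelStruct.Cofibrant (F.obj w) := cofibrant_map A.F_cof hFinit hw
  have hvInj : Inj MV.toModelStruct v := inj_of_fibrant hv
  have hIhomInj : Inj MV.toModelStruct ((ihom (F.obj w)).obj v) := inj_ihom_obj hFwCof hvInj
  have hGvInj : Inj MW.toModelStruct (G.obj v) := inj_G_obj A.adj A.F_cof A.F_trivCof hvInj
  have hDInj : Inj MW.toModelStruct (G.obj ((ihom (F.obj w)).obj v)) :=
    inj_G_obj A.adj A.F_cof A.F_trivCof hIhomInj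
  have hEInj : Inj MW.toModelStruct ((ihom w).obj (G.obj v)) := inj_ihom_obj hw hGvInj
  -- the key pointwise identity
  have core : ∀ {c : W} (f : c ⟶ G.obj ((ihom (F.obj w)).obj v)),
      MonoidalClosed.uncurry (f ≫ comparisonMap F G A.adj w v) =
      ((A.adj.unit.app w ⊗ₘ A.adj.unit.app c) ≫ LaxMonoidal.μ G (F.obj w) (F.obj c)) ≫
        G.map ((F.obj w) ◁ ((A.adj.homEquiv c ((ihom (F.obj w)).obj v)).symm f)) ≫
        G.map ((ihom.ev (F.obj w)).app v) := by
    intro c f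
    rw [comparisonMap, MonoidalClosed.uncurry_natural_left, MonoidalClosed.uncurry_curry]
    have lhs_eq : (w ◁ f) ≫ (A.adj.unit.app w ▷ G.obj ((ihom (F.obj w)).obj v)) =
        A.adj.unit.app w ⊗ₘ f := by
      rw [← MonoidalCategory.id_tensorHom, ← MonoidalCategory.tensorHom_id,
        MonoidalCategory.tensorHom_comp_tensorHom, id_comp, comp_id]
    have rhs_eq : (A.adj.unit.app w ⊗ₘ A.adj.unit.app c) ≫
        (G.obj (F.obj w) ◁ G.map ((A.adj.homEquiv c ((ihom (F.obj w)).obj v)).symm f)) =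
        A.adj.unit.app w ⊗ₘ f := by
      rw [← MonoidalCategory.id_tensorHom, MonoidalCategory.tensorHom_comp_tensorHom]
      congr 1
      · exact comp_id _
      · exact (A.adj.homEquiv_unit c _ ((A.adj.homEquiv c _).symm f)).symm.trans
          (Equiv.apply_symm_apply _ f)
    have step1 : (w ◁ f) ≫ (A.adj.unit.app w ▷ G.obj ((ihom (F.obj w)).obj v)) ≫
        LaxMonoidal.μ G (F.obj w) ((ihom (F.obj w)).obj v) ≫
        G.map ((ihom.ev (F.obj w)).app v) =
        (A.adj.unit.app w ⊗ₘ f) ≫ LaxMonoidal.μ G (F.obj w) ((ihom (F.obj w)).obj v) ≫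
        G.map ((ihom.ev (F.obj w)).app v) := by
      rw [← assoc, lhs_eq]
    have step2 : ((A.adj.unit.app w ⊗ₘ A.adj.unit.app c) ≫ LaxMonoidal.μ G (F.obj w) (F.obj c)) ≫
        G.map ((F.obj w) ◁ ((A.adj.homEquiv c ((ihom (F.obj w)).obj v)).symm f)) ≫
        G.map ((ihom.ev (F.obj w)).app v) =
        (A.adj.unit.app w ⊗ₘ f) ≫ LaxMonoidal.μ G (F.obj w) ((ihom (F.obj w)).obj v) ≫
        G.map ((ihom.ev (F.obj w)).app v) := by
      calc ((A.adj.unit.app w ⊗ₘ A.adj.unit.app c) ≫ LaxMonoidal.μ G (F.obj w) (F.obj c)) ≫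
            G.map ((F.obj w) ◁ ((A.adj.homEquiv c ((ihom (F.obj w)).obj v)).symm f)) ≫
            G.map ((ihom.ev (F.obj w)).app v)
          = (A.adj.unit.app w ⊗ₘ A.adj.unit.app c) ≫ (LaxMonoidal.μ G (F.obj w) (F.obj c) ≫
            G.map ((F.obj w) ◁ ((A.adj.homEquiv c ((ihom (F.obj w)).obj v)).symm f))) ≫
            G.map ((ihom.ev (F.obj w)).app v) := by simp only [assoc]
        _ = (A.adj.unit.app w ⊗ₘ A.adj.unit.app c) ≫
            ((G.obj (F.obj w) ◁ G.map ((A.adj.homEquiv c ((ihom (F.obj w)).obj v)).symm f)) ≫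
            LaxMonoidal.μ G (F.obj w) ((ihom (F.obj w)).obj v)) ≫
            G.map ((ihom.ev (F.obj w)).app v) := by
            rw [← Functor.LaxMonoidal.μ_natural_right]
        _ = ((A.adj.unit.app w ⊗ₘ A.adj.unit.app c) ≫
            (G.obj (F.obj w) ◁ G.map ((A.adj.homEquiv c ((ihom (F.obj w)).obj v)).symm f))) ≫
            LaxMonoidal.μ G (F.obj w) ((ihom (F.obj w)).obj v) ≫
            G.map ((ihom.ev (F.obj w)).app v) := by simp only [assoc]
        _ = (A.adj.unit.app w ⊗ₘ f) ≫ LaxMonoidal.μ G (F.obj w) ((ihom (F.obj w)).obj v) ≫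
            G.map ((ihom.ev (F.obj w)).app v) := by rw [rhs_eq]
    exact step1.trans step2.symm
  have key : ∀ {c : W} (f : c ⟶ G.obj ((ihom (F.obj w)).obj v)),
      (A.adj.homEquiv (w ⊗ c) v).symm
          (MonoidalClosed.uncurry (f ≫ comparisonMap F G A.adj w v)) =
        OplaxMonoidal.δ F w c ≫
          MonoidalClosed.uncurry ((A.adj.homEquiv c ((ihom (F.obj w)).obj v)).symm f) := by
    intro c f
    have hδeq : OplaxMonoidal.δ F w c =
        (A.adj.homEquiv (w ⊗ c) (F.obj w ⊗ F.obj c)).symm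
          ((A.adj.unit.app w ⊗ₘ A.adj.unit.app c) ≫ LaxMonoidal.μ G (F.obj w) (F.obj c)) := by
      rw [← A.compat_comul, Equiv.symm_apply_apply]
    rw [core f, ← assoc, A.adj.homEquiv_naturality_right_symm,
      A.adj.homEquiv_naturality_right_symm, hδeq, MonoidalClosed.uncurry_eq, assoc]
  -- main bijectivity argument
  apply weq_of_postQ_bij _ hDInj hEInj
  intro c hc
  have hFc : MV.toModelStruct.Cofibrant (F.obj c) := cofibrant_map A.F_cof hFinit hc
  have hwc : MW.toModelStruct.Cofibrant (w ⊗ c) := cofibrant_tensor hw hc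
  have hFwc : MV.toModelStruct.Cofibrant (F.obj (w ⊗ c)) := cofibrant_map A.F_cof hFinit hwc
  have hFwFc : MV.toModelStruct.Cofibrant (F.obj w ⊗ F.obj c) := cofibrant_tensor hFwCof hFc
  obtain ⟨cxc, -⟩ := exists_stdCyl MW.toModelStruct c
  obtain ⟨cwc, -⟩ := exists_stdCyl MW.toModelStruct (w ⊗ c)
  obtain ⟨cFc, -⟩ := exists_stdCyl MV.toModelStruct (F.obj c)
  -- transport of homotopies across the adjunctions (both directions)
  have h1 : ∀ f g : c ⟶ G.obj ((ihom (F.obj w)).obj v), Htpy MW.toModelStruct f g ↔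
      Htpy MV.toModelStruct ((A.adj.homEquiv c ((ihom (F.obj w)).obj v)).symm f)
        ((A.adj.homEquiv c ((ihom (F.obj w)).obj v)).symm g) := by
    intro f g
    constructor
    · intro h
      have h2 := htpy_map A.F_cof A.F_trivCof hc h
      have h3 := htpy_postcomp h2 (A.adj.counit.app ((ihom (F.obj w)).obj v))
      rw [A.adj.homEquiv_counit, A.adj.homEquiv_counit]
      exact h3
    · intro h
      obtain ⟨H, hH0, hH1⟩ := htpy_transfer h hIhomInj (F.map cxc.i0) (F.map cxc.i1)
        (F.map cxc.p) (map_desc_cof A.F_cof cxc)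
        (by rw [← F.map_comp, cxc.i0_p, F.map_id]) (by rw [← F.map_comp, cxc.i1_p, F.map_id])
      refine ⟨cxc, A.adj.homEquiv _ _ H, ?_, ?_⟩
      · rw [← A.adj.homEquiv_naturality_left, hH0, Equiv.apply_symm_apply]
      · rw [← A.adj.homEquiv_naturality_left, hH1, Equiv.apply_symm_apply]
  have h4 : ∀ f g : w ⊗ c ⟶ G.obj v, Htpy MW.toModelStruct f g ↔
      Htpy MV.toModelStruct ((A.adj.homEquiv (w ⊗ c) v).symm f)
        ((A.adj.homEquiv (w ⊗ c) v).symm g) := by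
    intro f g
    constructor
    · intro h
      have h2 := htpy_map A.F_cof A.F_trivCof hwc h
      have h3 := htpy_postcomp h2 (A.adj.counit.app v)
      rw [A.adj.homEquiv_counit, A.adj.homEquiv_counit]
      exact h3
    · intro h
      obtain ⟨H, hH0, hH1⟩ := htpy_transfer h hvInj (F.map cwc.i0) (F.map cwc.i1)
        (F.map cwc.p) (map_desc_cof A.F_cof cwc)
        (by rw [← F.map_comp, cwc.i0_p, F.map_id]) (by rw [← F.map_comp, cwc.i1_p, F.map_id])
      refine ⟨cwc, A.adj.homEquiv _ _ H, ?_, ?_⟩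
      · rw [← A.adj.homEquiv_naturality_left, hH0, Equiv.apply_symm_apply]
      · rw [← A.adj.homEquiv_naturality_left, hH1, Equiv.apply_symm_apply]
  have h2 : ∀ s s' : F.obj c ⟶ (ihom (F.obj w)).obj v, Htpy MV.toModelStruct s s' ↔
      Htpy MV.toModelStruct (MonoidalClosed.uncurry s) (MonoidalClosed.uncurry s') := by
    intro s s'
    constructor
    · intro h
      have hh := htpy_map (L := tensorLeft (F.obj w))
        (fun i hi => cof_whiskerLeft hFwCof hi)
        (fun i hic hiw => weq_whiskerLeft hFwCof hic hiw) hFc h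
      have h3 := htpy_postcomp hh ((ihom.ev (F.obj w)).app v)
      rw [MonoidalClosed.uncurry_eq, MonoidalClosed.uncurry_eq]
      exact h3
    · intro h
      obtain ⟨H, hH0, hH1⟩ := htpy_transfer h hvInj ((F.obj w) ◁ cFc.i0) ((F.obj w) ◁ cFc.i1)
        ((F.obj w) ◁ cFc.p)
        (map_desc_cof (L := tensorLeft (F.obj w)) (fun i hi => cof_whiskerLeft hFwCof hi) cFc)
        (by rw [← MonoidalCategory.whiskerLeft_comp, cFc.i0_p, MonoidalCategory.whiskerLeft_id])
        (by rw [← MonoidalCategory.whiskerLeft_comp, cFc.i1_p, MonoidalCategory.whiskerLeft_id])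
      refine ⟨cFc, MonoidalClosed.curry H, ?_, ?_⟩
      · rw [← MonoidalClosed.curry_natural_left, hH0, MonoidalClosed.curry_uncurry]
      · rw [← MonoidalClosed.curry_natural_left, hH1, MonoidalClosed.curry_uncurry]
  have h3 : ∀ s s' : c ⟶ (ihom w).obj (G.obj v), Htpy MW.toModelStruct s s' ↔
      Htpy MW.toModelStruct (MonoidalClosed.uncurry s) (MonoidalClosed.uncurry s') := by
    intro s s'
    constructor
    · intro h
      have hh := htpy_map (L := tensorLeft w)
        (fun i hi => cof_whiskerLeft hw hi)
        (fun i hic hiw => weq_whiskerLeft hw hic hiw) hc h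
      have h3 := htpy_postcomp hh ((ihom.ev w).app (G.obj v))
      rw [MonoidalClosed.uncurry_eq, MonoidalClosed.uncurry_eq]
      exact h3
    · intro h
      obtain ⟨H, hH0, hH1⟩ := htpy_transfer h hGvInj (w ◁ cxc.i0) (w ◁ cxc.i1) (w ◁ cxc.p)
        (map_desc_cof (L := tensorLeft w) (fun i hi => cof_whiskerLeft hw hi) cxc)
        (by rw [← MonoidalCategory.whiskerLeft_comp, cxc.i0_p, MonoidalCategory.whiskerLeft_id])
        (by rw [← MonoidalCategory.whiskerLeft_comp, cxc.i1_p, MonoidalCategory.whiskerLeft_id])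
      refine ⟨cxc, MonoidalClosed.curry H, ?_, ?_⟩
      · rw [← MonoidalClosed.curry_natural_left, hH0, MonoidalClosed.curry_uncurry]
      · rw [← MonoidalClosed.curry_natural_left, hH1, MonoidalClosed.curry_uncurry]
  -- precomposition with δ is bijective
  have hδw : MV.weq (OplaxMonoidal.δ F w c) := A.comul_weq w c hw hc
  obtain ⟨mδ, jδ, qδ, hjδc, hjδw, hqδf, facδ⟩ :=
    MV.toModelStruct.factor_trivCof_fib (OplaxMonoidal.δ F w c)
  have hqδw : MV.weq qδ := MV.toModelStruct.weq_of_precomp jδ qδ hjδw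
    (by rw [facδ]; exact hδw)
  have bδ : Function.Bijective
      (preQ (OplaxMonoidal.δ F w c) hvInj :
        HCl MV.toModelStruct (F.obj w ⊗ F.obj c) v →
        HCl MV.toModelStruct (F.obj (w ⊗ c)) v) := by
    have e : (preQ (OplaxMonoidal.δ F w c) hvInj :
        HCl MV.toModelStruct (F.obj w ⊗ F.obj c) v →
        HCl MV.toModelStruct (F.obj (w ⊗ c)) v) =
        preQ jδ hvInj ∘ preQ qδ hvInj := by
      funext a; induction a using Quot.ind with | _ f => ?_
      show Quot.mk _ (OplaxMonoidal.δ F w c ≫ f) = Quot.mk _ (jδ ≫ qδ ≫ f)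
      rw [← assoc, facδ]
    rw [e]
    exact (bij_preQ_trivCof hjδc hjδw hFwc hvInj).comp (bij_preQ_trivFib hqδf hqδw hFwFc hvInj)
  constructor
  · -- injectivity
    intro a b hab
    induction a using Quot.ind with | _ f => ?_
    induction b using Quot.ind with | _ g => ?_
    have hfg : Htpy MW.toModelStruct (f ≫ comparisonMap F G A.adj w v)
        (g ≫ comparisonMap F G A.adj w v) := (hcl_eq_iff hc hEInj).1 hab
    have t1 := (h3 _ _).1 hfg
    have t2 := (h4 _ _).1 t1
    rw [key f, key g] at t2
    have t3 : preQ (OplaxMonoidal.δ F w c) hvInj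
        (Quot.mk _ (MonoidalClosed.uncurry ((A.adj.homEquiv c ((ihom (F.obj w)).obj v)).symm f))) =
        preQ (OplaxMonoidal.δ F w c) hvInj
        (Quot.mk _ (MonoidalClosed.uncurry ((A.adj.homEquiv c ((ihom (F.obj w)).obj v)).symm g))) :=
      Quot.sound t2
    have t4 := bδ.1 t3
    have t5 := (hcl_eq_iff hFwFc hvInj).1 t4
    have t6 := (h2 _ _).2 t5
    exact Quot.sound ((h1 _ _).2 t6)
  · -- surjectivity
    intro b
    induction b using Quot.ind with | _ g => ?_
    obtain ⟨Y, hY⟩ := bδ.2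
      (Quot.mk _ ((A.adj.homEquiv (w ⊗ c) v).symm (MonoidalClosed.uncurry g)))
    induction Y using Quot.ind with | _ u => ?_
    have hu : Htpy MV.toModelStruct (OplaxMonoidal.δ F w c ≫ u)
        ((A.adj.homEquiv (w ⊗ c) v).symm (MonoidalClosed.uncurry g)) :=
      (hcl_eq_iff hFwc hvInj).1 hY
    refine ⟨Quot.mk _ (A.adj.homEquiv c ((ihom (F.obj w)).obj v) (MonoidalClosed.curry u)), ?_⟩
    show Quot.mk _ ((A.adj.homEquiv c ((ihom (F.obj w)).obj v) (MonoidalClosed.curry u)) ≫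
      comparisonMap F G A.adj w v) = Quot.mk _ g
    apply Quot.sound
    apply (h3 _ _).2
    apply (h4 _ _).2
    rw [key (A.adj.homEquiv c ((ihom (F.obj w)).obj v) (MonoidalClosed.curry u)),
      Equiv.symm_apply_apply, MonoidalClosed.uncurry_curry]
    exact hu
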